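/- Let F be a field with characteristic greater than n (or zero), and let β ∈ F with β ∉ {0,1,...,n}. If f ∈ F[x_1,...,x_n] is a multilinear polynomial such that f(x)·(x_1+⋯+x_n−β) ≡ 1 modulo the ideal generated by {x_i²−x_i}, then deg f = n. -/

import Mathlib

open MvPolynomial

open Finset

lemma key_identity {F : Type*} [Field F] :
    ∀ (n : ℕ) (x : F), (∀ k : ℕ, k ≤ n → x + k ≠ 0) →
      (∑ k ∈ Finset.range (n+1), (-1:F)^k * (n.choose k) * (x+k)⁻¹)
        = ((Nat.factorial n : ℕ) : F) * (∏ k ∈ Finset.range (n+1), (x+k))⁻¹ := by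
  intro n
  induction n with
  | zero =>
    intro x hx
    have h0 : x ≠ 0 := by simpa using hx 0 le_rfl
    simp [h0]
  | succ n ih =>
    intro x hx
    have hx0 : ∀ k : ℕ, k ≤ n → x + k ≠ 0 := fun k hk => hx k (hk.trans (Nat.le_succ n))
    have hx1 : ∀ k : ℕ, k ≤ n → (x+1) + k ≠ 0 := by
      intro k hk
      have h := hx (k+1) (by omega)
      push_cast at h ⊢
      intro hc; apply h; rw [← hc]; ring
    -- recurrence for the sum
    have hrec : (∑ k ∈ Finset.range (n+2), (-1:F)^k * ((n+1).choose k) * (x+k)⁻¹)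
        = (∑ k ∈ Finset.range (n+1), (-1:F)^k * (n.choose k) * (x+k)⁻¹)
          - (∑ k ∈ Finset.range (n+1), (-1:F)^k * (n.choose k) * ((x+1)+k)⁻¹) := by
      have hA : (∑ k ∈ Finset.range (n+2), (-1:F)^k * (n.choose k) * (x+k)⁻¹)
          = ∑ k ∈ Finset.range (n+1), (-1:F)^k * (n.choose k) * (x+k)⁻¹ := by
        rw [Finset.sum_range_succ]
        simp [Nat.choose_succ_self]
      rw [← hA,
        Finset.sum_range_succ' (fun k => (-1:F)^k * ((n+1).choose k) * (x+k)⁻¹),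
        Finset.sum_range_succ' (fun k => (-1:F)^k * (n.choose k) * (x+k)⁻¹)]
      have hterm : ∀ k ∈ Finset.range (n+1),
          (-1:F)^(k+1) * ((n+1).choose (k+1)) * (x+((k+1:ℕ):F))⁻¹
          = (-1:F)^(k+1) * (n.choose (k+1)) * (x+((k+1:ℕ):F))⁻¹
            - (-1:F)^k * (n.choose k) * ((x+1)+(k:F))⁻¹ := by
        intro k _
        have pascal : (((n+1).choose (k+1) : ℕ) : F) = (n.choose (k+1) : F) + (n.choose k : F) := by
          rw [Nat.choose_succ_succ]; push_cast; ring
        have harg : (x+1) + (k:F) = x + ((k+1 : ℕ) : F) := by push_cast; ring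
        rw [pascal, harg]
        ring
      rw [Finset.sum_congr rfl hterm, Finset.sum_sub_distrib]
      norm_num
      ring
    rw [hrec, ih x hx0, ih (x+1) hx1]
    -- field algebra
    have hP : (∏ k ∈ Finset.range (n+1), (x+k)) ≠ 0 :=
      Finset.prod_ne_zero_iff.2 fun k hk => hx0 k (Nat.lt_succ_iff.mp (Finset.mem_range.mp hk))
    have hQ : (∏ k ∈ Finset.range (n+1), ((x+1)+k)) ≠ 0 :=
      Finset.prod_ne_zero_iff.2 fun k hk => hx1 k (Nat.lt_succ_iff.mp (Finset.mem_range.mp hk))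
    have hlast : x + ((n+1 : ℕ) : F) ≠ 0 := hx (n+1) le_rfl
    have h0 : x ≠ 0 := by simpa using hx 0 (by omega)
    have e1 : (∏ k ∈ Finset.range (n+2), (x+k)) = (∏ k ∈ Finset.range (n+1), (x+k)) * (x+((n+1:ℕ):F)) := by
      rw [Finset.prod_range_succ]
    have e2 : (∏ k ∈ Finset.range (n+2), (x+k)) = x * (∏ k ∈ Finset.range (n+1), ((x+1)+k)) := by
      rw [Finset.prod_range_succ' (fun k => (x + (k:F))), mul_comm]
      congr 1
      · norm_num
      · refine Finset.prod_congr rfl fun k _ => ?_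
        push_cast; ring
    have hPinv : (∏ k ∈ Finset.range (n+2), (x+k))⁻¹ * (x + ((n+1:ℕ):F))
        = (∏ k ∈ Finset.range (n+1), (x+k))⁻¹ := by
      rw [e1, mul_inv, mul_assoc, inv_mul_cancel₀ hlast, mul_one]
    have hQinv : (∏ k ∈ Finset.range (n+2), (x+k))⁻¹ * x
        = (∏ k ∈ Finset.range (n+1), ((x+1)+k))⁻¹ := by
      rw [e2, mul_inv, mul_comm (x⁻¹), mul_assoc, inv_mul_cancel₀ h0, mul_one]
    rw [← hPinv, ← hQinv, Nat.factorial_succ]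
    push_cast
    ring

lemma prod_pow_indicator {n : ℕ} {F : Type*} [CommRing F] (S : Finset (Fin n)) (d : Fin n →₀ ℕ) :
    (d.prod fun i e => (if i ∈ S then (1:F) else 0) ^ e)
      = if d.support ⊆ S then 1 else 0 := by
  by_cases h : d.support ⊆ S
  · rw [if_pos h]
    refine Finset.prod_eq_one fun i hi => ?_
    simp [if_pos (h hi)]
  · rw [if_neg h]
    obtain ⟨i, hi, hiS⟩ := Finset.not_subset.mp h
    refine Finset.prod_eq_zero hi ?_
    simp only [if_neg hiS]
    exact zero_pow (Finsupp.mem_support_iff.mp hi)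

lemma sum_compl_sign {n : ℕ} {F : Type*} [CommRing F] (A : Finset (Fin n)) :
    (∑ S : Finset (Fin n), (-1:F)^(Sᶜ.card) * (if A ⊆ S then (1:F) else 0))
      = if A = Finset.univ then 1 else 0 := by
  rw [← Equiv.sum_comp (Function.Involutive.toPerm _ (compl_involutive (α := Finset (Fin n))))
    (fun S => (-1:F)^(Sᶜ.card) * (if A ⊆ S then (1:F) else 0))]
  simp only [Function.Involutive.coe_toPerm, compl_compl]
  have : ∀ S : Finset (Fin n), (-1:F)^(S.card) * (if A ⊆ Sᶜ then (1:F) else 0)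
      = if S ∈ Aᶜ.powerset then (-1:F)^(S.card) else 0 := by
    intro S
    by_cases h : A ⊆ Sᶜ
    · have h2 : S ∈ Aᶜ.powerset := Finset.mem_powerset.mpr (Finset.subset_compl_comm.mp h)
      rw [if_pos h, if_pos h2, mul_one]
    · have h2 : S ∉ Aᶜ.powerset := fun hc => h (Finset.subset_compl_comm.mpr (Finset.mem_powerset.mp hc))
      rw [if_neg h, if_neg h2, mul_zero]
  rw [Finset.sum_congr rfl fun S _ => (by convert this S using 2; exact if_congr Iff.rfl rfl rfl), Finset.sum_ite_mem, Finset.univ_inter]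
  have hz := congrArg (fun z : ℤ => (z : F)) (Finset.sum_powerset_neg_one_pow_card (x := Aᶜ))
  push_cast at hz
  rw [hz]
  congr 1
  simp [Finset.eq_univ_iff_forall, Finset.eq_empty_iff_forall_notMem]

lemma coeff_top {n : ℕ} {F : Type*} [CommRing F] (f : MvPolynomial (Fin n) F)
    (hml : ∀ i : Fin n, degreeOf i f ≤ 1) :
    coeff (Finsupp.equivFunOnFinite.symm fun _ => (1:ℕ)) f
      = ∑ S : Finset (Fin n), (-1:F)^(Sᶜ.card) * eval (fun i => if i ∈ S then (1:F) else 0) f := by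
  set D : Fin n →₀ ℕ := Finsupp.equivFunOnFinite.symm fun _ => 1 with hDdef
  have hDi : ∀ i, D i = 1 := fun _ => rfl
  have hDsupp : D.support = Finset.univ := by
    ext i; simp [Finsupp.mem_support_iff, hDi]
  conv_rhs => rw [f.as_sum]
  conv_lhs => rw [f.as_sum]
  rw [MvPolynomial.coeff_sum]
  simp only [map_sum, eval_monomial, coeff_monomial, Finset.mul_sum]
  rw [Finset.sum_comm]
  refine Finset.sum_congr rfl fun d hd => ?_
  have hh : ∀ S : Finset (Fin n), (-1:F)^(Sᶜ.card)
        * (coeff d f * (d.prod fun i e => (if i ∈ S then (1:F) else 0) ^ e))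
      = coeff d f * ((-1:F)^(Sᶜ.card) * (if d.support ⊆ S then 1 else 0)) := by
    intro S; rw [prod_pow_indicator]; ring
  rw [Finset.sum_congr rfl fun S _ => hh S, ← Finset.mul_sum, sum_compl_sign]
  by_cases hdu : d.support = Finset.univ
  · have hdD : d = D := by
      ext i
      have h1 : d i ≤ 1 :=
        le_trans (by rw [MvPolynomial.degreeOf_eq_sup]; exact Finset.le_sup (f := fun s => s i) hd) (hml i)
      have h2 : d i ≠ 0 :=
        Finsupp.mem_support_iff.mp (hdu ▸ Finset.mem_univ i)
      have h3 := hDi i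
      omega
    rw [if_pos hdD, if_pos hdu, mul_one]
  · have hdD : d ≠ D := fun h => hdu (h ▸ hDsupp)
    rw [if_neg hdD, if_neg hdu, mul_zero]

/-- If `f` is a multilinear polynomial over a field of characteristic `0` or `> n`,
`β ∉ {0,…,n}`, and `f · (x₁+⋯+xₙ−β) ≡ 1` modulo the ideal generated by the `xᵢ²−xᵢ`,
then `deg f = n`. -/
theorem stmt0 {F : Type*} [Field F] (n : ℕ) (p : ℕ) [CharP F p] (hp : p = 0 ∨ n < p)
    (β : F) (hβ : ∀ k : ℕ, k ≤ n → β ≠ (k : F))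
    (f : MvPolynomial (Fin n) F)
    (hml : ∀ i : Fin n, MvPolynomial.degreeOf i f ≤ 1)
    (hf : f * ((∑ i : Fin n, X i) - C β) - 1 ∈
      Ideal.span (Set.range fun i : Fin n => (X i : MvPolynomial (Fin n) F) ^ 2 - X i)) :
    f.totalDegree = n := by
  classical
  set D : Fin n →₀ ℕ := Finsupp.equivFunOnFinite.symm fun _ => 1 with hDdef
  -- evaluations on the cube
  have hev : ∀ S : Finset (Fin n),
      eval (fun i => if i ∈ S then (1:F) else 0) f * ((S.card : F) - β) = 1 := by
    intro S
    set φ := (eval (fun i => if i ∈ S then (1:F) else 0) : MvPolynomial (Fin n) F →+* F)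
    have hker : Ideal.span (Set.range fun i : Fin n =>
        (X i : MvPolynomial (Fin n) F) ^ 2 - X i) ≤ RingHom.ker φ := by
      rw [Ideal.span_le]
      rintro _ ⟨i, rfl⟩
      simp only [SetLike.mem_coe, RingHom.mem_ker, map_sub, map_pow, φ, eval_X]
      by_cases h : i ∈ S <;> simp [h]
    have h0 : φ (f * ((∑ i : Fin n, X i) - C β) - 1) = 0 := hker hf
    have hsum : φ (∑ i : Fin n, X i) = (S.card : F) := by
      simp only [map_sum, φ, eval_X]
      rw [Finset.sum_ite_mem, Finset.univ_inter, Finset.sum_const, nsmul_eq_mul, mul_one]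
    rw [map_sub, map_mul, map_sub, map_one, hsum, eval_C] at h0
    have := sub_eq_zero.mp h0
    exact this
  have hcard_le : ∀ S : Finset (Fin n), S.card ≤ n := by
    intro S
    simpa using Finset.card_le_univ S
  have hne : ∀ S : Finset (Fin n), ((S.card : F) - β) ≠ 0 := fun S =>
    sub_ne_zero_of_ne (fun h => hβ S.card (hcard_le S) h.symm)
  have hevalf : ∀ S : Finset (Fin n),
      eval (fun i => if i ∈ S then (1:F) else 0) f = ((S.card : F) - β)⁻¹ := by
    intro S
    exact eq_inv_of_mul_eq_one_right (by rw [mul_comm]; exact hev S)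
  -- the top coefficient
  have hcoeff : coeff D f
      = ∑ S : Finset (Fin n), (-1:F)^(Sᶜ.card) * ((S.card : F) - β)⁻¹ := by
    rw [hDdef, coeff_top f hml]
    exact Finset.sum_congr rfl fun S _ => by rw [hevalf S]
  -- group by cardinality
  have hsign : ∀ k : ℕ, k ≤ n → (-1:F)^(n - k) = (-1)^n * (-1)^k := by
    intro k hk
    have h1 : (-1:F)^k * (-1)^k = 1 := by
      rw [← pow_add, ← two_mul, pow_mul]; norm_num
    have h2 : (-1:F)^n = (-1)^(n-k) * (-1)^k := by
      rw [← pow_add, Nat.sub_add_cancel hk]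
    rw [h2, mul_assoc, h1, mul_one]
  have hgroup : coeff D f
      = (-1:F)^n * ∑ k ∈ Finset.range (n+1), (-1:F)^k * (n.choose k) * ((-β) + k)⁻¹ := by
    rw [hcoeff]
    have hcompl : ∀ S : Finset (Fin n), (Sᶜ.card) = n - S.card := by
      intro S; rw [Finset.card_compl]; simp
    have step1 : (∑ S : Finset (Fin n), (-1:F)^(Sᶜ.card) * ((S.card : F) - β)⁻¹)
        = ∑ S ∈ (Finset.univ : Finset (Fin n)).powerset,
            ((-1:F)^(n - S.card) * ((S.card : F) - β)⁻¹) := by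
      rw [Finset.powerset_univ]
      exact Finset.sum_congr rfl fun S _ => by rw [hcompl S]
    rw [step1, Finset.sum_powerset_apply_card (fun m => (-1:F)^(n - m) * ((m : F) - β)⁻¹)]
    rw [Finset.mul_sum]
    rw [Finset.card_univ, Fintype.card_fin]
    refine Finset.sum_congr rfl fun k hk => ?_
    have hkn : k ≤ n := Nat.lt_succ_iff.mp (Finset.mem_range.mp hk)
    rw [hsign k hkn, nsmul_eq_mul]
    have : ((k:F) - β) = (-β) + k := by ring
    rw [this]
    ring
  -- key identity
  have hxk : ∀ k : ℕ, k ≤ n → (-β) + (k:F) ≠ 0 := by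
    intro k hk h
    exact hβ k hk (by linear_combination -h)
  have hkey := key_identity n (-β) hxk
  rw [hkey] at hgroup
  -- nonvanishing of n!
  have hfact : ((Nat.factorial n : ℕ) : F) ≠ 0 := by
    rcases hp with hp | hp
    · subst hp
      haveI : CharZero F := CharP.charP_to_charZero F
      exact_mod_cast Nat.cast_ne_zero.mpr (Nat.factorial_ne_zero n)
    · rcases CharP.char_is_prime_or_zero F p with hpr | hz
      · rw [Ne, CharP.cast_eq_zero_iff F p]
        intro hdvd
        exact absurd ((Nat.Prime.dvd_factorial hpr).mp hdvd) (by omega)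
      · omega
  have hprod : (∏ k ∈ Finset.range (n+1), ((-β) + (k:F))) ≠ 0 :=
    Finset.prod_ne_zero_iff.2 fun k hk => hxk k (Nat.lt_succ_iff.mp (Finset.mem_range.mp hk))
  have hcoeff_ne : coeff D f ≠ 0 := by
    rw [hgroup]
    exact mul_ne_zero (pow_ne_zero _ (by norm_num))
      (mul_ne_zero hfact (inv_ne_zero hprod))
  -- conclude
  have hDsum : (D.sum fun _ e => e) = n := by
    rw [Finsupp.sum_fintype _ _ (fun _ => rfl)]
    simp [hDdef]
  refine le_antisymm ?_ ?_
  · rw [MvPolynomial.totalDegree]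
    apply Finset.sup_le
    intro d hd
    rw [Finsupp.sum_fintype _ _ (fun _ => rfl)]
    calc (∑ i : Fin n, d i) ≤ ∑ _i : Fin n, 1 := by
          refine Finset.sum_le_sum fun i _ => ?_
          exact le_trans (by rw [MvPolynomial.degreeOf_eq_sup]
                             exact Finset.le_sup (f := fun s => s i) hd) (hml i)
      _ = n := by simp
  · have hle := MvPolynomial.le_totalDegree (p := f)
      (MvPolynomial.mem_support_iff.mpr hcoeff_ne)
    rwa [hDsum] at hle
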